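/- Let (g,[·,·],φ) be a regular Hom-Lie algebra. Then ad⋆ : g → gl(g*) defined by ad⋆_x ξ = ad*_{φ(x)}((φ⁻²)*(ξ)), i.e. ⟨ad⋆_x ξ, y⟩ = −⟨ξ, [φ⁻¹(x), φ⁻²(y)]⟩, is a representation of g on g* with respect to (φ⁻¹)*: ad⋆ satisfies ad⋆_{φ(x)}∘(φ⁻¹)* = (φ⁻¹)*∘ad⋆_x and ad⋆_{[x,y]}∘(φ⁻¹)* = ad⋆_{φ(x)}∘ad⋆_y − ad⋆_{φ(y)}∘ad⋆_x. -/
import Mathlib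


open LinearMap Module

/-- A (regular, i.e. multiplicative with invertible structure map) Hom-Lie algebra. -/
structure HomLieAlgebra (K g : Type*) [Field K] [AddCommGroup g] [Module K g] where
  bracket : g →ₗ[K] g →ₗ[K] g
  phi : g ≃ₗ[K] g
  skew : ∀ x y, bracket x y = - bracket y x
  phi_bracket : ∀ x y, phi (bracket x y) = bracket (phi x) (phi y)
  jacobi : ∀ x y z,
    bracket (phi x) (bracket y z) + bracket (phi y) (bracket z x)
      + bracket (phi z) (bracket x y) = 0

variable {K g V : Type*} [Field K] [AddCommGroup g] [Module K g]
  [AddCommGroup V] [Module K V]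

/-- `ρ` is a representation of the Hom-Lie algebra `L` on `V` with respect to `β`. -/
def HomLieAlgebra.IsRep (L : HomLieAlgebra K g) (β : V ≃ₗ[K] V)
    (ρ : g →ₗ[K] V →ₗ[K] V) : Prop :=
  (∀ x u, ρ (L.phi x) (β u) = β (ρ x u)) ∧
  (∀ x y u, ρ (L.bracket x y) (β u) = ρ (L.phi x) (ρ y u) - ρ (L.phi y) (ρ x u))

/-- The coadjoint representation: `⟨ad⋆_x ξ, y⟩ = −⟨ξ, [φ⁻¹(x), φ⁻²(y)]⟩`. -/
def coadRep (L : HomLieAlgebra K g) (x : g) (ξ : Dual K g) : Dual K g :=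
  - (ξ ∘ₗ L.bracket (L.phi.symm x) ∘ₗ L.phi.symm.toLinearMap ∘ₗ L.phi.symm.toLinearMap)

lemma symm_bracket (L : HomLieAlgebra K g) (x y : g) :
    L.phi.symm (L.bracket x y) = L.bracket (L.phi.symm x) (L.phi.symm y) := by
  apply L.phi.injective
  rw [L.phi_bracket]
  simp

/-- `ad⋆` is a representation of `g` on `g*` with respect to `(φ⁻¹)*`,
where `(φ⁻¹)* ξ = ξ ∘ φ⁻¹`. -/
theorem coadRep_isRep (L : HomLieAlgebra K g) :
    (∀ (x : g) (ξ : Dual K g),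
      coadRep L (L.phi x) (ξ ∘ₗ L.phi.symm.toLinearMap)
        = (coadRep L x ξ) ∘ₗ L.phi.symm.toLinearMap) ∧
    (∀ (x y : g) (ξ : Dual K g),
      coadRep L (L.bracket x y) (ξ ∘ₗ L.phi.symm.toLinearMap)
        = coadRep L (L.phi x) (coadRep L y ξ)
          - coadRep L (L.phi y) (coadRep L x ξ)) := by
  constructor
  · intro x ξ
    ext z
    simp [coadRep, symm_bracket]
  · intro x y ξ
    ext z
    simp only [coadRep, LinearMap.sub_apply, LinearMap.neg_apply, LinearMap.coe_comp,
      Function.comp_apply, LinearEquiv.coe_coe, symm_bracket, LinearEquiv.symm_apply_apply,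
      map_neg]
    have J := L.jacobi (L.phi.symm (L.phi.symm x)) (L.phi.symm (L.phi.symm y))
      (L.phi.symm (L.phi.symm (L.phi.symm (L.phi.symm z))))
    simp only [LinearEquiv.apply_symm_apply] at J
    have hz : L.bracket
        (L.bracket (L.phi.symm (L.phi.symm x)) (L.phi.symm (L.phi.symm y)))
        (L.phi.symm (L.phi.symm (L.phi.symm z)))
        = L.bracket (L.phi.symm x)
            (L.bracket (L.phi.symm (L.phi.symm y))
              (L.phi.symm (L.phi.symm (L.phi.symm (L.phi.symm z)))))
          - L.bracket (L.phi.symm y)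
            (L.bracket (L.phi.symm (L.phi.symm x))
              (L.phi.symm (L.phi.symm (L.phi.symm (L.phi.symm z))))) := by
      have hB : L.bracket (L.phi.symm y)
          (L.bracket (L.phi.symm (L.phi.symm (L.phi.symm (L.phi.symm z))))
            (L.phi.symm (L.phi.symm x)))
          = - L.bracket (L.phi.symm y)
            (L.bracket (L.phi.symm (L.phi.symm x))
              (L.phi.symm (L.phi.symm (L.phi.symm (L.phi.symm z))))) := by
        rw [L.skew (L.phi.symm (L.phi.symm (L.phi.symm (L.phi.symm z))))
          (L.phi.symm (L.phi.symm x))]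
        simp
      rw [hB] at J
      have hC := eq_neg_of_add_eq_zero_right J
      rw [L.skew, hC]
      abel
    rw [hz]
    simp [map_sub]
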